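/- Infinitesimal removability implies removability (abstract algebraic version): let D be a derivation on an associative algebra commuting with d/dλ, let α(λ) and Q(λ) be smooth matrix-valued curves with α'(λ) = D(Q(λ)) − [α(λ), Q(λ)], and let S(λ) solve S' = Q·S, S(λ₀) = 1. Then Z(λ) := D(S(λ)) + S(λ)·α(λ₀) − α(λ)·S(λ) satisfies Z'(λ) = Q(λ)·Z(λ) and Z(λ₀) = 0; consequently Z(λ) = 0 for all λ, i.e. α(λ₀)^{S(λ)} = α(λ). -/

import Mathlib

open Set

/-- Entrywise product rule for matrix-valued curves. -/
lemma matDerivMul {n : ℕ} {A B A' B' : ℝ → Matrix (Fin n) (Fin n) ℂ}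
    (hA : ∀ (x : ℝ) (i j : Fin n), HasDerivAt (fun t => A t i j) (A' x i j) x)
    (hB : ∀ (x : ℝ) (i j : Fin n), HasDerivAt (fun t => B t i j) (B' x i j) x)
    (x : ℝ) (i j : Fin n) :
    HasDerivAt (fun t => (A t * B t) i j) ((A' x * B x + A x * B' x) i j) x := by
  simp only [Matrix.mul_apply, Matrix.add_apply, ← Finset.sum_add_distrib]
  exact HasDerivAt.fun_sum fun k _ => (hA x i k).mul (hB x k j)

/-- Infinitesimal removability implies removability. `D` is a derivation acting
pointwise in `λ` on matrix-valued curves (the abstract stand-in for `d_h`),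
commuting with `d/dλ` (derivatives in `λ` are taken entrywise). If
`α'(λ) = D(Q)(λ) − [α λ, Q λ]` and `S' = Q·S` with `S λ₀ = 1`, then
`Z := D S + S·α(λ₀) − α·S` satisfies `Z' = Q·Z`, `Z λ₀ = 0`, and hence
`Z ≡ 0`, i.e. `α(λ₀)^{S(λ)} = α(λ)`. -/
theorem stmt4 {n : ℕ}
    (D : (ℝ → Matrix (Fin n) (Fin n) ℂ) → (ℝ → Matrix (Fin n) (Fin n) ℂ))
    (hDadd : ∀ f g, D (f + g) = D f + D g)
    (hDLeib : ∀ f g, D (f * g) = D f * g + f * D g)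
    (hDpt : ∀ (f g : ℝ → Matrix (Fin n) (Fin n) ℂ) (x : ℝ),
      f x = g x → D f x = D g x)
    (hDderiv : ∀ f g : ℝ → Matrix (Fin n) (Fin n) ℂ,
      (∀ (x : ℝ) (i j : Fin n), HasDerivAt (fun t => f t i j) (g x i j) x) →
      ∀ (x : ℝ) (i j : Fin n), HasDerivAt (fun t => D f t i j) (D g x i j) x)
    (α αd Q S : ℝ → Matrix (Fin n) (Fin n) ℂ) (lam₀ : ℝ)
    (hQcont : ∀ i j : Fin n, Continuous fun t => Q t i j)
    (hα : ∀ (x : ℝ) (i j : Fin n), HasDerivAt (fun t => α t i j) (αd x i j) x)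
    (hinf : ∀ x : ℝ, αd x = D Q x - (α x * Q x - Q x * α x))
    (hS : ∀ (x : ℝ) (i j : Fin n),
      HasDerivAt (fun t => S t i j) ((Q x * S x) i j) x)
    (hS0 : S lam₀ = 1) :
    (∀ (x : ℝ) (i j : Fin n),
        HasDerivAt (fun t => (D S t + S t * α lam₀ - α t * S t) i j)
          ((Q x * (D S x + S x * α lam₀ - α x * S x)) i j) x) ∧
      D S lam₀ + S lam₀ * α lam₀ - α lam₀ * S lam₀ = 0 ∧
      (∀ x : ℝ, D S x + S x * α lam₀ - α x * S x = 0) := by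
  -- D kills constants
  have hD1 : D 1 = 0 := by
    have h := hDLeib 1 1
    rw [one_mul, mul_one, one_mul] at h
    exact (left_eq_add.mp h)
  -- derivative of D S
  have hDS : ∀ (x : ℝ) (i j : Fin n),
      HasDerivAt (fun t => D S t i j) ((D Q x * S x + Q x * D S x) i j) x := by
    intro x i j
    have h := hDderiv S (Q * S) (fun x i j => hS x i j) x i j
    rwa [hDLeib Q S] at h
  -- algebraic identity for the derivative of Z
  have key : ∀ x : ℝ,
      Q x * (D S x + S x * α lam₀ - α x * S x) =
        D Q x * S x + Q x * D S x + Q x * S x * α lam₀ -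
          (αd x * S x + α x * (Q x * S x)) := by
    intro x
    rw [hinf x]
    noncomm_ring
  -- Part 1: Z' = Q Z entrywise
  have goal1 : ∀ (x : ℝ) (i j : Fin n),
      HasDerivAt (fun t => (D S t + S t * α lam₀ - α t * S t) i j)
        ((Q x * (D S x + S x * α lam₀ - α x * S x)) i j) x := by
    intro x i j
    have h2 : HasDerivAt (fun t => (S t * α lam₀) i j)
        ((Q x * S x * α lam₀) i j) x := by
      have := matDerivMul (A' := fun x => Q x * S x) (B := fun _ => α lam₀)
        (B' := fun _ => 0) hS (fun x i j => hasDerivAt_const x (α lam₀ i j)) x i j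
      simpa using this
    have h3 : HasDerivAt (fun t => (α t * S t) i j)
        ((αd x * S x + α x * (Q x * S x)) i j) x :=
      matDerivMul (A' := αd) (B' := fun x => Q x * S x) hα hS x i j
    rw [key x]
    exact ((hDS x i j).add h2).sub h3
  -- Part 2: Z lam₀ = 0
  have hDS0 : D S lam₀ = 0 := by
    have h := hDpt S 1 lam₀ hS0
    rw [hD1] at h
    simpa using h
  have goal2 : D S lam₀ + S lam₀ * α lam₀ - α lam₀ * S lam₀ = 0 := by
    rw [hDS0, hS0, one_mul, mul_one]
    simp
  refine ⟨goal1, goal2, ?_⟩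
  -- Part 3: ODE uniqueness
  intro x
  set Z : ℝ → Matrix (Fin n) (Fin n) ℂ :=
    fun t => D S t + S t * α lam₀ - α t * S t with hZdef
  -- work on the interval [a, b]
  set a : ℝ := min x lam₀ - 1 with ha
  set b : ℝ := max x lam₀ + 1 with hb
  have hab : a ≤ b := by
    have h1 : min x lam₀ ≤ max x lam₀ := le_trans (min_le_left _ _) (le_max_left _ _)
    simp only [ha, hb]; linarith
  have hxmem : x ∈ Icc a b := by
    constructor
    · simp only [ha]; have := min_le_left x lam₀; linarith
    · simp only [hb]; have := le_max_left x lam₀; linarith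
  have hlmem : lam₀ ∈ Ioo a b := by
    constructor
    · simp only [ha]; have := min_le_right x lam₀; linarith
    · simp only [hb]; have := le_max_right x lam₀; linarith
  -- clamp to [a, b]
  set c : ℝ → ℝ := fun t => max a (min b t) with hc
  have hccont : Continuous c := continuous_const.max (continuous_const.min continuous_id)
  have hcmem : ∀ t, c t ∈ Icc a b := fun t => ⟨le_max_left _ _, max_le hab (min_le_left _ _)⟩
  have hcid : ∀ t ∈ Icc a b, c t = t := by
    intro t ht
    simp only [hc]
    rw [min_eq_right ht.2, max_eq_right ht.1]
  -- a bound on the entries of Q on [a, b]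
  set gQ : ℝ → ℝ := fun t => ∑ i : Fin n, ∑ k : Fin n, ‖Q t i k‖ with hgQ
  have hgQcont : Continuous gQ := by
    apply continuous_finset_sum
    intro i _
    exact continuous_finset_sum _ fun k _ => (hQcont i k).norm
  obtain ⟨C, hC⟩ := (isCompact_Icc (a := a) (b := b)).exists_bound_of_continuousOn
    hgQcont.continuousOn
  have hC0 : 0 ≤ C := le_trans (norm_nonneg _) (hC lam₀ (Ioo_subset_Icc_self hlmem))
  have hQbound : ∀ (t : ℝ) (i k : Fin n), ‖Q (c t) i k‖ ≤ C := by
    intro t i k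
    have h1 : ‖Q (c t) i k‖ ≤ ∑ k : Fin n, ‖Q (c t) i k‖ :=
      Finset.single_le_sum (fun k _ => norm_nonneg _) (Finset.mem_univ k)
    have h2 : (∑ k : Fin n, ‖Q (c t) i k‖) ≤ gQ (c t) :=
      Finset.single_le_sum (f := fun i => ∑ k : Fin n, ‖Q (c t) i k‖)
        (fun i _ => Finset.sum_nonneg fun k _ => norm_nonneg _) (Finset.mem_univ i)
    have h3 : gQ (c t) ≤ C := le_trans (le_abs_self _) (hC _ (hcmem t))
    linarith
  -- the vector field
  set v : ℝ → (Fin n → Fin n → ℂ) → (Fin n → Fin n → ℂ) := fun t z => fun i j => ∑ k, Q (c t) i k * z k j with hv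
  have hvlin : ∀ (t : ℝ) (z w : Fin n → Fin n → ℂ), v t z - v t w = v t (z - w) := by
    intro t z w
    funext i j
    simp [hv, Pi.sub_apply, ← Finset.sum_sub_distrib, mul_sub]
  have hvnorm : ∀ (t : ℝ) (u : Fin n → Fin n → ℂ), ‖v t u‖ ≤ n * C * ‖u‖ := by
    intro t u
    have hnn : (0 : ℝ) ≤ n * C * ‖u‖ := by positivity
    rw [pi_norm_le_iff_of_nonneg hnn]
    intro i
    rw [pi_norm_le_iff_of_nonneg hnn]
    intro j
    calc ‖∑ k, Q (c t) i k * u k j‖ ≤ ∑ k, ‖Q (c t) i k * u k j‖ := norm_sum_le _ _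
      _ ≤ ∑ _k : Fin n, C * ‖u‖ := by
          apply Finset.sum_le_sum
          intro k _
          rw [norm_mul]
          have hu : ‖u k j‖ ≤ ‖u‖ := le_trans (norm_le_pi_norm (u k) j)
            (norm_le_pi_norm u k)
          exact mul_le_mul (hQbound t i k) hu (norm_nonneg _) hC0
      _ = n * C * ‖u‖ := by
          rw [Finset.sum_const, Finset.card_univ, Fintype.card_fin, nsmul_eq_mul]
          ring
  set K : NNReal := Real.toNNReal (n * C) with hK
  have hKcoe : (K : ℝ) = n * C := Real.coe_toNNReal _ (by positivity)
  have hlip : ∀ t, LipschitzWith K (v t) := by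
    intro t
    apply LipschitzWith.of_dist_le_mul
    intro z w
    rw [dist_eq_norm, dist_eq_norm, hvlin, hKcoe]
    exact hvnorm t (z - w)
  -- Z as a curve in E, and the zero curve, both solve z' = v t z on Ioo a b
  have hZderiv : ∀ t ∈ Ioo a b,
      HasDerivAt (fun s (i j : Fin n) => Z s i j) (v t (fun i j => Z t i j)) t := by
    intro t ht
    rw [hasDerivAt_pi]
    intro i
    rw [hasDerivAt_pi]
    intro j
    have hvz : v t (fun i j => Z t i j) i j = (Q t * Z t) i j := by
      simp only [hv, Matrix.mul_apply, hcid t (Ioo_subset_Icc_self ht)]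
    rw [hvz]
    exact goal1 t i j
  have h0deriv : ∀ t ∈ Ioo a b, HasDerivAt (fun _ : ℝ => (0 : Fin n → Fin n → ℂ)) (v t 0) t := by
    intro t ht
    have : v t 0 = 0 := by
      funext i j
      simp [hv, Pi.zero_apply]
    rw [this]
    exact hasDerivAt_const t 0
  have hZcont : Continuous fun s (i j : Fin n) => Z s i j := by
    rw [continuous_iff_continuousAt]
    intro t
    have := hZderiv
    apply continuousAt_pi.mpr
    intro i
    apply continuousAt_pi.mpr
    intro j
    exact (goal1 t i j).continuousAt
  have huniq := ODE_solution_unique_of_mem_Icc (v := v) (s := fun _ => (univ : Set (Fin n → Fin n → ℂ)))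
    (K := K) (f := fun s (i j : Fin n) => Z s i j) (g := fun _ => 0)
    (fun t _ => (hlip t).lipschitzOnWith)
    hlmem hZcont.continuousOn (fun t ht => hZderiv t ht) (fun _ _ => trivial)
    continuous_const.continuousOn (fun t ht => h0deriv t ht) (fun _ _ => trivial)
    (by funext i j; exact congrFun (congrFun goal2 i) j)
  have hx0 := huniq hxmem
  funext i j
  exact congrFun (congrFun hx0 i) j
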